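/- The map γ ↦ σ(γ) is a bijection between the set of combinatorially coherent φ-monotone paths on ◇^n and the set of nonzero sign vectors {−1,0,1}^{n−1} \ {0}; in particular there are exactly 3^{n−1} − 1 combinatorially coherent φ-monotone paths. -/

import Mathlib

open scoped BigOperators

/-- The `i`-th standard basis vector of `ℝ^n`. -/
noncomputable def stdVec (n : ℕ) (i : Fin n) : Fin n → ℝ := Pi.single i 1

/-- The last standard basis vector `e_n` of `ℝ^{n+2}`. -/
noncomputable def lastVec (n : ℕ) : Fin (n + 2) → ℝ := stdVec (n + 2) (Fin.last (n + 1))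

/-- The linear functional `φ(x) = ∑ i, a i * x i`. -/
def phi (n : ℕ) (a : Fin (n + 2) → ℝ) (x : Fin (n + 2) → ℝ) : ℝ := ∑ i, a i * x i

/-- A vertex of the cross-polytope `◇^n`: one of the `2n` points `±e_i`. -/
def IsCPVertex (n : ℕ) (x : Fin n → ℝ) : Prop :=
  ∃ i : Fin n, x = stdVec n i ∨ x = -stdVec n i

/-- The cross-polytope `◇^n = conv{±e_1, …, ±e_n}`. -/
noncomputable def crossPoly (n : ℕ) : Set (Fin n → ℝ) :=
  convexHull ℝ {x | IsCPVertex n x}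

/-- A `φ`-monotone path on `◇^{n+2}`, encoded as the list of its vertices:
it starts at `-e_n`, ends at `e_n`, visits only vertices, is strictly `φ`-increasing,
and consecutive vertices are not antipodal. -/
def IsMonoPath (n : ℕ) (a : Fin (n + 2) → ℝ) (l : List (Fin (n + 2) → ℝ)) : Prop :=
  l.head? = some (-lastVec n) ∧
  l.getLast? = some (lastVec n) ∧
  (∀ v ∈ l, IsCPVertex (n + 2) v) ∧
  l.Chain' (fun u v => phi n a u < phi n a v ∧ v ≠ -u)

/-- A monotone path is combinatorially coherent if no antipodal pair `±e_j`
(`j ∈ {1, …, n-1}`) occurs among its interior vertices. -/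
def CombCoherent (n : ℕ) (l : List (Fin (n + 2) → ℝ)) : Prop :=
  ¬ ∃ j : Fin (n + 1), stdVec (n + 2) j.castSucc ∈ l.tail.dropLast ∧
      -stdVec (n + 2) j.castSucc ∈ l.tail.dropLast

/-- The Billera–Sturmfels point `p(γ)` associated to a monotone path. -/
noncomputable def pathPoint (n : ℕ) (a : Fin (n + 2) → ℝ) (l : List (Fin (n + 2) → ℝ)) :
    Fin (n + 2) → ℝ :=
  ((l.zip l.tail).map fun q =>
    ((phi n a q.2 - phi n a q.1) / (4 * a (Fin.last (n + 1)))) • (q.1 + q.2)).sum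

/-- The monotone path polytope `MPP_φ(◇^{n+2})`. -/
noncomputable def MPP (n : ℕ) (a : Fin (n + 2) → ℝ) : Set (Fin (n + 2) → ℝ) :=
  convexHull ℝ {x | ∃ l, IsMonoPath n a l ∧ x = pathPoint n a l}

open Classical in
/-- The sign vector `σ(γ) ∈ {-1,0,1}^{n+1}` of a monotone path. -/
noncomputable def sigmaVec (n : ℕ) (l : List (Fin (n + 2) → ℝ)) : Fin (n + 1) → ℤ :=
  fun j =>
    if stdVec (n + 2) j.castSucc ∈ l then 1
    else if -stdVec (n + 2) j.castSucc ∈ l then -1 else 0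


/- ### helper lemmas -/

lemma stdVec_apply (n : ℕ) (i j : Fin n) : stdVec n i j = if j = i then 1 else 0 :=
  Pi.single_apply i 1 j

lemma std_inj {n : ℕ} {i j : Fin n} (h : stdVec n i = stdVec n j) : i = j := by
  by_contra hne
  have := congrFun h i
  simp [stdVec_apply, hne] at this

lemma std_ne_neg_std (n : ℕ) (i j : Fin n) : stdVec n i ≠ -stdVec n j := by
  intro h
  have := congrFun h i
  simp only [stdVec_apply, Pi.neg_apply] at this
  by_cases hij : i = j <;> simp [hij] at this <;> norm_num at this

lemma neg_std_inj {n : ℕ} {i j : Fin n} (h : -stdVec n i = -stdVec n j) : i = j :=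
  std_inj (neg_injective h)

lemma phi_std (n : ℕ) (a : Fin (n + 2) → ℝ) (i : Fin (n + 2)) :
    phi n a (stdVec (n + 2) i) = a i := by
  simp [phi, stdVec, Pi.single_apply, mul_ite]

lemma phi_neg (n : ℕ) (a : Fin (n + 2) → ℝ) (x : Fin (n + 2) → ℝ) :
    phi n a (-x) = -phi n a x := by
  simp [phi, mul_neg, Finset.sum_neg_distrib]

lemma phi_neg_std (n : ℕ) (a : Fin (n + 2) → ℝ) (i : Fin (n + 2)) :
    phi n a (-stdVec (n + 2) i) = -a i := by
  rw [phi_neg, phi_std]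

lemma std_ne_lastVec {n : ℕ} (j : Fin (n + 1)) : stdVec (n + 2) j.castSucc ≠ lastVec n := by
  intro h
  exact (Fin.castSucc_lt_last j).ne (std_inj h)

lemma neg_std_ne_neg_lastVec {n : ℕ} (j : Fin (n + 1)) :
    -stdVec (n + 2) j.castSucc ≠ -lastVec n := by
  intro h
  exact (Fin.castSucc_lt_last j).ne (std_inj (neg_injective h))

/- ### construction -/

noncomputable def negList (n : ℕ) (u : Fin (n + 1) → ℤ) : List (Fin (n + 2) → ℝ) :=
  (((List.finRange (n + 1)).reverse).filter (fun j => decide (u j = -1))).map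
    (fun j => -stdVec (n + 2) j.castSucc)

noncomputable def posList (n : ℕ) (u : Fin (n + 1) → ℤ) : List (Fin (n + 2) → ℝ) :=
  ((List.finRange (n + 1)).filter (fun j => decide (u j = 1))).map
    (fun j => stdVec (n + 2) j.castSucc)

noncomputable def pathOf (n : ℕ) (u : Fin (n + 1) → ℤ) : List (Fin (n + 2) → ℝ) :=
  (-lastVec n :: (negList n u ++ posList n u)) ++ [lastVec n]

lemma mem_negList {n : ℕ} {u : Fin (n + 1) → ℤ} {v : Fin (n + 2) → ℝ} :
    v ∈ negList n u ↔ ∃ j, u j = -1 ∧ v = -stdVec (n + 2) j.castSucc := by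
  simp [negList, List.mem_filter, eq_comm, and_comm]

lemma mem_posList {n : ℕ} {u : Fin (n + 1) → ℤ} {v : Fin (n + 2) → ℝ} :
    v ∈ posList n u ↔ ∃ j, u j = 1 ∧ v = stdVec (n + 2) j.castSucc := by
  simp [posList, List.mem_filter, eq_comm, and_comm]

section Construction
variable {n : ℕ} {a : Fin (n + 2) → ℝ} (h0 : 0 < a 0) (ha : StrictMono a)
  {u : Fin (n + 1) → ℤ}

include h0 ha

lemma apos : ∀ i, 0 < a i := fun i => by
  rcases eq_or_ne i 0 with rfl | h
  · exact h0
  · exact h0.trans (ha (Fin.pos_of_ne_zero h))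

lemma pairwise_B :
    List.Pairwise (fun x y => phi n a x < phi n a y ∧ y ≠ -x)
      (negList n u ++ posList n u ++ [lastVec n]) := by
  have hneg : List.Pairwise (fun x y => phi n a x < phi n a y ∧ y ≠ -x) (negList n u) := by
    rw [negList, List.pairwise_map]
    refine List.Pairwise.filter _ ?_
    rw [List.pairwise_reverse]
    refine (List.pairwise_lt_finRange (n + 1)).imp ?_
    intro j k hjk
    constructor
    · rw [phi_neg_std, phi_neg_std, neg_lt_neg_iff]
      exact ha (Fin.castSucc_lt_castSucc_iff.2 hjk)
    · rw [neg_neg]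
      exact fun h => std_ne_neg_std _ _ _ h.symm
  have hpos : List.Pairwise (fun x y => phi n a x < phi n a y ∧ y ≠ -x) (posList n u) := by
    rw [posList, List.pairwise_map]
    refine List.Pairwise.filter _ ?_
    refine (List.pairwise_lt_finRange (n + 1)).imp ?_
    intro j k hjk
    refine ⟨?_, std_ne_neg_std _ _ _⟩
    rw [phi_std, phi_std]
    exact ha (Fin.castSucc_lt_castSucc_iff.2 hjk)
  have hcross : ∀ x ∈ negList n u, ∀ y ∈ posList n u,
      phi n a x < phi n a y ∧ y ≠ -x := by
    intro x hx y hy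
    obtain ⟨j, hj, rfl⟩ := mem_negList.1 hx
    obtain ⟨k, hk, rfl⟩ := mem_posList.1 hy
    constructor
    · rw [phi_neg_std, phi_std]
      exact lt_trans (neg_lt_zero.2 (apos h0 ha _)) (apos h0 ha _)
    · rw [neg_neg]
      intro h
      have hkj : k = j := Fin.castSucc_injective _ (std_inj h)
      rw [hkj, hj] at hk
      norm_num at hk
  have hlastR : ∀ x ∈ negList n u ++ posList n u,
      phi n a x < phi n a (lastVec n) ∧ lastVec n ≠ -x := by
    intro x hx
    rw [List.mem_append] at hx
    rcases hx with hx | hx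
    · obtain ⟨j, hj, rfl⟩ := mem_negList.1 hx
      refine ⟨?_, ?_⟩
      · rw [phi_neg_std, lastVec, phi_std]
        exact lt_trans (neg_lt_zero.2 (apos h0 ha _)) (apos h0 ha _)
      · rw [neg_neg]
        exact fun h => std_ne_lastVec j h.symm
    · obtain ⟨j, hj, rfl⟩ := mem_posList.1 hx
      refine ⟨?_, ?_⟩
      · rw [lastVec, phi_std, phi_std]
        exact ha (Fin.castSucc_lt_last j)
      · rw [lastVec]
        exact std_ne_neg_std _ _ _
  rw [List.pairwise_append]
  refine ⟨?_, List.pairwise_singleton _ _, ?_⟩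
  · rw [List.pairwise_append]
    exact ⟨hneg, hpos, hcross⟩
  · intro x hx y hy
    rw [List.mem_singleton] at hy
    subst hy
    exact hlastR x hx

lemma M_ne_nil (hu : ∀ i, u i = -1 ∨ u i = 0 ∨ u i = 1) (hne : u ≠ 0) :
    negList n u ++ posList n u ≠ [] := by
  obtain ⟨i, hi⟩ : ∃ i, u i ≠ 0 := by
    by_contra h; push_neg at h; exact hne (funext h)
  rcases hu i with h | h | h
  · exact fun hnil =>
      (List.ne_nil_of_mem (List.mem_append.2 (Or.inl (mem_negList.2 ⟨i, h, rfl⟩)))) hnil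
  · exact absurd h hi
  · exact fun hnil =>
      (List.ne_nil_of_mem (List.mem_append.2 (Or.inr (mem_posList.2 ⟨i, h, rfl⟩)))) hnil

lemma isMonoPath_pathOf (hu : ∀ i, u i = -1 ∨ u i = 0 ∨ u i = 1) (hne : u ≠ 0) :
    IsMonoPath n a (pathOf n u) := by
  refine ⟨by simp [pathOf], List.getLast?_concat, ?_, ?_⟩
  · intro v hv
    simp only [pathOf, List.cons_append, List.mem_cons, List.mem_append,
      List.mem_singleton, List.not_mem_nil, or_false] at hv
    rcases hv with rfl | (hv | hv) | rfl
    · exact ⟨Fin.last (n + 1), Or.inr (by rw [lastVec])⟩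
    · obtain ⟨j, _, rfl⟩ := mem_negList.1 hv
      exact ⟨j.castSucc, Or.inr rfl⟩
    · obtain ⟨j, _, rfl⟩ := mem_posList.1 hv
      exact ⟨j.castSucc, Or.inl rfl⟩
    · exact ⟨Fin.last (n + 1), Or.inl (by rw [lastVec])⟩
  · have hB := (pairwise_B h0 ha (u := u)).isChain
    unfold List.Chain'
    rw [pathOf, List.cons_append, List.isChain_cons]
    refine ⟨?_, hB⟩
    intro y hy
    obtain ⟨m, M', hM⟩ := List.exists_cons_of_ne_nil (M_ne_nil h0 ha hu hne)
    rw [hM, List.cons_append, List.head?_cons, Option.mem_some_iff] at hy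
    have hm : y ∈ negList n u ++ posList n u := by
      rw [← hy, hM]; exact List.mem_cons_self
    rcases List.mem_append.1 hm with hv | hv
    · obtain ⟨j, _, rfl⟩ := mem_negList.1 hv
      constructor
      · rw [lastVec, phi_neg_std, phi_neg_std, neg_lt_neg_iff]
        exact ha (Fin.castSucc_lt_last j)
      · rw [neg_neg, lastVec]
        exact fun h => std_ne_neg_std _ _ _ h.symm
    · obtain ⟨j, _, rfl⟩ := mem_posList.1 hv
      constructor
      · rw [lastVec, phi_neg_std, phi_std]
        exact lt_trans (neg_lt_zero.2 (apos h0 ha _)) (apos h0 ha _)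
      · rw [neg_neg, lastVec]
        exact std_ne_lastVec j

omit h0 ha

lemma tail_dropLast_pathOf : (pathOf n u).tail.dropLast = negList n u ++ posList n u := by
  rw [pathOf, List.cons_append, List.tail_cons, List.dropLast_concat]

lemma coherent_pathOf : CombCoherent n (pathOf n u) := by
  rintro ⟨j, h1, h2⟩
  rw [tail_dropLast_pathOf] at h1 h2
  rcases List.mem_append.1 h1 with h1 | h1
  · obtain ⟨k, _, hk⟩ := mem_negList.1 h1
    exact std_ne_neg_std _ _ _ hk
  · obtain ⟨k, hk1, hk⟩ := mem_posList.1 h1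
    have hjk : j = k := Fin.castSucc_injective _ (std_inj hk)
    subst hjk
    rcases List.mem_append.1 h2 with h2 | h2
    · obtain ⟨k', hk1', hk'⟩ := mem_negList.1 h2
      have : j = k' := Fin.castSucc_injective _ (neg_std_inj hk')
      rw [this, hk1'] at hk1
      norm_num at hk1
    · obtain ⟨k', _, hk'⟩ := mem_posList.1 h2
      exact std_ne_neg_std _ _ _ hk'.symm

lemma std_mem_pathOf (j : Fin (n + 1)) :
    stdVec (n + 2) j.castSucc ∈ pathOf n u ↔ u j = 1 := by
  constructor
  · intro hv
    simp only [pathOf, List.cons_append, List.mem_cons, List.mem_append,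
      List.mem_singleton, List.not_mem_nil, or_false] at hv
    rcases hv with h | (h | h) | h
    · rw [lastVec] at h
      exact absurd h (std_ne_neg_std _ _ _)
    · obtain ⟨k, _, hk⟩ := mem_negList.1 h
      exact absurd hk (std_ne_neg_std _ _ _)
    · obtain ⟨k, hk1, hk⟩ := mem_posList.1 h
      rwa [Fin.castSucc_injective _ (std_inj hk)]
    · exact absurd h (std_ne_lastVec j)
  · intro h
    simp only [pathOf, List.cons_append, List.mem_cons, List.mem_append,
      List.mem_singleton, List.not_mem_nil, or_false]
    exact Or.inr (Or.inl (Or.inr (mem_posList.2 ⟨j, h, rfl⟩)))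

lemma neg_std_mem_pathOf (j : Fin (n + 1)) :
    -stdVec (n + 2) j.castSucc ∈ pathOf n u ↔ u j = -1 := by
  constructor
  · intro hv
    simp only [pathOf, List.cons_append, List.mem_cons, List.mem_append,
      List.mem_singleton, List.not_mem_nil, or_false] at hv
    rcases hv with h | (h | h) | h
    · exact absurd h (neg_std_ne_neg_lastVec j)
    · obtain ⟨k, hk1, hk⟩ := mem_negList.1 h
      rwa [Fin.castSucc_injective _ (neg_std_inj hk)]
    · obtain ⟨k, _, hk⟩ := mem_posList.1 h
      exact absurd hk.symm (std_ne_neg_std _ _ _)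
    · rw [lastVec] at h
      exact absurd h.symm (std_ne_neg_std _ _ _)
  · intro h
    simp only [pathOf, List.cons_append, List.mem_cons, List.mem_append,
      List.mem_singleton, List.not_mem_nil, or_false]
    exact Or.inr (Or.inl (Or.inl (mem_negList.2 ⟨j, h, rfl⟩)))

lemma sigma_pathOf (hu : ∀ i, u i = -1 ∨ u i = 0 ∨ u i = 1) :
    sigmaVec n (pathOf n u) = u := by
  funext j
  rcases hu j with h | h | h <;>
    simp [sigmaVec, std_mem_pathOf, neg_std_mem_pathOf, h]

end Construction

section Paths
variable {n : ℕ} {a : Fin (n + 2) → ℝ} {l l₁ l₂ : List (Fin (n + 2) → ℝ)}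

lemma neg_lastVec_ne : -lastVec n ≠ lastVec n := by
  intro h
  have := congrFun h (Fin.last (n + 1))
  simp [lastVec, stdVec_apply] at this
  norm_num at this

lemma monopath_pairwise (hl : IsMonoPath n a l) :
    List.Pairwise (fun x y => phi n a x < phi n a y) l := by
  haveI : Trans (fun x y => phi n a x < phi n a y) (fun x y => phi n a x < phi n a y)
      (fun x y => phi n a x < phi n a y) :=
    ⟨lt_trans⟩
  exact List.isChain_iff_pairwise.1 (List.IsChain.imp (fun _ _ h => h.1) hl.2.2.2)

lemma monopath_nodup (hl : IsMonoPath n a l) : l.Nodup :=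
  (monopath_pairwise hl).imp (fun h e => absurd (e ▸ h) (lt_irrefl _))

lemma monopath_eq (hl1 : IsMonoPath n a l₁) (hl2 : IsMonoPath n a l₂)
    (h : ∀ v, v ∈ l₁ ↔ v ∈ l₂) : l₁ = l₂ := by
  haveI : IsAntisymm (Fin (n + 2) → ℝ) (fun x y => phi n a x < phi n a y) :=
    ⟨fun x y h1 h2 => absurd (h1.trans h2) (lt_irrefl _)⟩
  exact List.Perm.eq_of_pairwise'
    (monopath_pairwise hl1) (monopath_pairwise hl2)
    ((List.perm_ext_iff_of_nodup (monopath_nodup hl1) (monopath_nodup hl2)).2 h)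

lemma memInterior {v : Fin (n + 2) → ℝ} (hl : IsMonoPath n a l) (hv : v ∈ l)
    (h1 : v ≠ -lastVec n) (h2 : v ≠ lastVec n) : v ∈ l.tail.dropLast := by
  obtain ⟨h_head, h_last, -, -⟩ := hl
  cases l with
  | nil => simp at h_head
  | cons x t =>
    rw [List.head?_cons, Option.some_inj] at h_head
    subst h_head
    have hvt : v ∈ t := by
      rcases List.mem_cons.1 hv with rfl | h
      · exact absurd rfl h1
      · exact h
    rw [List.tail_cons]
    rcases eq_or_ne t [] with rfl | ht
    · simp at hvt
    · have hc := List.dropLast_append_getLast ht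
      rw [← hc, List.mem_append, List.mem_singleton] at hvt
      rcases hvt with hvt | rfl
      · exact hvt
      · exfalso
        apply h2
        rw [List.getLast?_eq_getLast (List.cons_ne_nil _ _), Option.some_inj] at h_last
        rw [← h_last, List.getLast_cons ht]


lemma mem_of_getLast?_eq {α : Type*} {l : List α} {x : α} (h : l.getLast? = some x) : x ∈ l := by
  obtain ⟨hne, rfl⟩ := List.mem_getLast?_eq_getLast (Option.mem_def.2 h)
  exact List.getLast_mem hne

lemma mem_monopath_iff (hl : IsMonoPath n a l) (hc : CombCoherent n l)
    (v : Fin (n + 2) → ℝ) :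
    v ∈ l ↔ (v = -lastVec n ∨ v = lastVec n ∨
      (∃ j, sigmaVec n l j = 1 ∧ v = stdVec (n + 2) j.castSucc) ∨
      (∃ j, sigmaVec n l j = -1 ∧ v = -stdVec (n + 2) j.castSucc)) := by
  constructor
  · intro hv
    obtain ⟨i, hi | hi⟩ := hl.2.2.1 v hv
    · rcases Fin.eq_castSucc_or_eq_last i with ⟨j, rfl⟩ | rfl
      · refine Or.inr (Or.inr (Or.inl ⟨j, ?_, hi⟩))
        simp [sigmaVec, hi ▸ hv]
      · exact Or.inr (Or.inl (by rw [hi, lastVec]))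
    · rcases Fin.eq_castSucc_or_eq_last i with ⟨j, rfl⟩ | rfl
      · refine Or.inr (Or.inr (Or.inr ⟨j, ?_, hi⟩))
        have hnotp : stdVec (n + 2) j.castSucc ∉ l := by
          intro hp
          exact hc ⟨j, memInterior hl hp
              (by rw [lastVec]; exact std_ne_neg_std _ _ _)
              (std_ne_lastVec j),
            memInterior hl (hi ▸ hv)
              (neg_std_ne_neg_lastVec j)
              (by rw [lastVec]; exact fun h => std_ne_neg_std _ _ _ h.symm)⟩
        simp [sigmaVec, hnotp, hi ▸ hv]
      · exact Or.inl (by rw [hi, lastVec])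
  · rintro (rfl | rfl | ⟨j, hj, rfl⟩ | ⟨j, hj, rfl⟩)
    · exact List.mem_of_mem_head? (Option.mem_def.2 hl.1)
    · exact mem_of_getLast?_eq hl.2.1
    · by_contra hnot
      simp only [sigmaVec] at hj
      rw [if_neg hnot] at hj
      split_ifs at hj <;> norm_num at hj
    · by_contra hnot
      simp only [sigmaVec] at hj
      split_ifs at hj

lemma sigma_ne_zero (hl : IsMonoPath n a l) : sigmaVec n l ≠ 0 := by
  intro h
  have hmem : ∀ v ∈ l, v = -lastVec n ∨ v = lastVec n := by
    intro v hv
    obtain ⟨i, hi | hi⟩ := hl.2.2.1 v hv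
    · rcases Fin.eq_castSucc_or_eq_last i with ⟨j, rfl⟩ | rfl
      · have hj := congrFun h j
        simp [sigmaVec, hi ▸ hv] at hj
      · exact Or.inr (by rw [hi, lastVec])
    · rcases Fin.eq_castSucc_or_eq_last i with ⟨j, rfl⟩ | rfl
      · have hj := congrFun h j
        simp only [sigmaVec, Pi.zero_apply] at hj
        split_ifs at hj
        · rw [hi] at hv; tauto
        · rw [hi] at hv; tauto
      · exact Or.inl (by rw [hi, lastVec])
  obtain ⟨h_head, h_last, -, hchain⟩ := hl
  cases l with
  | nil => simp at h_head
  | cons x t =>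
    rw [List.head?_cons, Option.some_inj] at h_head
    subst h_head
    cases t with
    | nil =>
      rw [List.getLast?_singleton, Option.some_inj] at h_last
      exact neg_lastVec_ne h_last
    | cons b s =>
      have hrel := (List.isChain_cons_cons.1 hchain).1
      rcases hmem b (List.mem_cons_of_mem _ (List.mem_cons_self)) with rfl | rfl
      · exact lt_irrefl _ hrel.1
      · exact hrel.2 (neg_neg _).symm

end Paths

/-- The map `γ ↦ σ(γ)` is a bijection between the combinatorially
coherent `φ`-monotone paths on `◇^{n+2}` and the nonzero sign vectors in
`{-1,0,1}^{n+1}`; in particular there are exactly `3^{n+1} - 1` combinatorially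
coherent `φ`-monotone paths. -/
theorem sigma_bijOn_and_card (n : ℕ) (a : Fin (n + 2) → ℝ)
    (h0 : 0 < a 0) (ha : StrictMono a) :
    Set.BijOn (sigmaVec n)
      {l : List (Fin (n + 2) → ℝ) | IsMonoPath n a l ∧ CombCoherent n l}
      {u : Fin (n + 1) → ℤ | (∀ i, u i = -1 ∨ u i = 0 ∨ u i = 1) ∧ u ≠ 0} ∧
    Set.ncard {l : List (Fin (n + 2) → ℝ) | IsMonoPath n a l ∧ CombCoherent n l} =
      3 ^ (n + 1) - 1 := by
  classical
  set S := {l : List (Fin (n + 2) → ℝ) | IsMonoPath n a l ∧ CombCoherent n l} with hS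
  set T := {u : Fin (n + 1) → ℤ | (∀ i, u i = -1 ∨ u i = 0 ∨ u i = 1) ∧ u ≠ 0} with hT
  have hmaps : Set.MapsTo (sigmaVec n) S T := by
    rintro l ⟨hl, hc⟩
    refine ⟨fun i => ?_, sigma_ne_zero hl⟩
    simp only [sigmaVec]
    split_ifs <;> simp
  have hinj : Set.InjOn (sigmaVec n) S := by
    rintro l1 ⟨hl1, hc1⟩ l2 ⟨hl2, hc2⟩ hσ
    refine monopath_eq hl1 hl2 (fun v => ?_)
    rw [mem_monopath_iff hl1 hc1 v, mem_monopath_iff hl2 hc2 v, hσ]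
  have hsurj : Set.SurjOn (sigmaVec n) S T := by
    rintro u ⟨hu, hne⟩
    exact ⟨pathOf n u, ⟨isMonoPath_pathOf h0 ha hu hne, coherent_pathOf⟩, sigma_pathOf hu⟩
  have hbij : Set.BijOn (sigmaVec n) S T := ⟨hmaps, hinj, hsurj⟩
  refine ⟨hbij, ?_⟩
  have h1 : S.ncard = T.ncard := by
    rw [← hbij.image_eq, Set.ncard_image_of_injOn hinj]
  rw [h1]
  have hTfin : T = ↑((Fintype.piFinset (fun _ : Fin (n + 1) => ({-1, 0, 1} : Finset ℤ))).erase 0) := by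
    ext u
    simp only [hT, Set.mem_setOf_eq, Finset.coe_erase, Set.mem_diff, Finset.mem_coe,
      Fintype.mem_piFinset, Finset.mem_insert, Finset.mem_singleton, Set.mem_singleton_iff]
  rw [hTfin, Set.ncard_coe_finset,
    Finset.card_erase_of_mem (by simp [Fintype.mem_piFinset]), Fintype.card_piFinset]
  simp
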